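/- arXiv:2112.13810 — 2 statements merged into one kernel-verified Lean document; each statement's English description precedes it below -/
import Mathlib

section
/- Suppose coefficients satisfy β_k^l = 2γ_{k+l}^l for all k ∈ ℤ_K and l ∈ ℤ_K\{0}. Then for any array (u_{k,j}), ∑_{k∈ℤ_K}∑_{j∈ℤ_M}∑_{l≠0} u_{k,j}[β_k^l(b_{k,j}^l − b_{k,j−1}^l) + γ_k^l(r_{k,j}^l − r_{k,j−1}^l)] = 0, where b_{k,j}^l = (1/2)(u_{k,j}u_{k+l,j} + u_{k,j+1}u_{k+l,j+1}) and r_{k,j}^l = u_{k−l,j}u_{k−l,j+1}. -/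
/-- `b_{k,j}^l = (1/2)(u_{k,j}u_{k+l,j} + u_{k,j+1}u_{k+l,j+1})`. -/
noncomputable def bTerm (K M : ℕ) (k : ZMod K) (j : ZMod M) (l : ZMod K)
    (u : (ZMod K × ZMod M) → ℝ) : ℝ :=
  (1 / 2) * (u (k, j) * u (k + l, j) + u (k, j + 1) * u (k + l, j + 1))

/-- `r_{k,j}^l = u_{k−l,j}u_{k−l,j+1}`. -/
noncomputable def rTerm (K M : ℕ) (k : ZMod K) (j : ZMod M) (l : ZMod K)
    (u : (ZMod K × ZMod M) → ℝ) : ℝ :=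
  u (k - l, j) * u (k - l, j + 1)

lemma shift_sum_aux {K M : ℕ} [NeZero K] [NeZero M] (a : ZMod K) (b : ZMod M)
    (f : ZMod K → ZMod M → ℝ) :
    ∑ k : ZMod K, ∑ j : ZMod M, f (k + a) (j + b)
      = ∑ k : ZMod K, ∑ j : ZMod M, f k j := by
  rw [← Equiv.sum_comp (Equiv.addRight a) (fun k => ∑ j : ZMod M, f k j)]
  refine Finset.sum_congr rfl fun k _ => ?_
  simpa using Equiv.sum_comp (Equiv.addRight b) (f (k + a))

lemma shift_sum_k {K M : ℕ} [NeZero K] [NeZero M] (a : ZMod K)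
    (f : ZMod K → ZMod M → ℝ) :
    ∑ k : ZMod K, ∑ j : ZMod M, f (k + a) j
      = ∑ k : ZMod K, ∑ j : ZMod M, f k j :=
  Equiv.sum_comp (Equiv.addRight a) (fun k => ∑ j : ZMod M, f k j)

lemma shift_sum_j {K M : ℕ} [NeZero K] [NeZero M] (b : ZMod M)
    (f : ZMod K → ZMod M → ℝ) :
    ∑ k : ZMod K, ∑ j : ZMod M, f k (j + b)
      = ∑ k : ZMod K, ∑ j : ZMod M, f k j :=
  Finset.sum_congr rfl fun k _ => by
    simpa using Equiv.sum_comp (Equiv.addRight b) (f k)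

lemma key_sum {K M : ℕ} [NeZero K] [NeZero M] (l : ZMod K) (g : ZMod K → ℝ)
    (u : (ZMod K × ZMod M) → ℝ) :
    ∑ k : ZMod K, ∑ j : ZMod M,
      (g (k + l) * u (k, j) * u (k, j + 1) * u (k + l, j + 1)
        - g (k + l) * u (k, j) * u (k, j - 1) * u (k + l, j - 1)
        + g k * u (k, j) * u (k - l, j) * u (k - l, j + 1)
        - g k * u (k, j) * u (k - l, j - 1) * u (k - l, j)) = 0 := by
  have hA : ∑ k : ZMod K, ∑ j : ZMod M,
      g (k + l) * u (k, j) * u (k, j + 1) * u (k + l, j + 1)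
    = ∑ k : ZMod K, ∑ j : ZMod M,
      g k * u (k, j) * u (k - l, j - 1) * u (k - l, j) := by
    rw [← shift_sum_aux l 1 (fun k j => g k * u (k, j) * u (k - l, j - 1) * u (k - l, j))]
    refine Finset.sum_congr rfl fun k _ => Finset.sum_congr rfl fun j _ => ?_
    simp only [add_sub_cancel_right]
    ring
  have hC : ∑ k : ZMod K, ∑ j : ZMod M,
      g k * u (k, j) * u (k - l, j) * u (k - l, j + 1)
    = ∑ k : ZMod K, ∑ j : ZMod M,
      g (k + l) * u (k, j) * u (k, j - 1) * u (k + l, j - 1) := by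
    calc ∑ k : ZMod K, ∑ j : ZMod M, g k * u (k, j) * u (k - l, j) * u (k - l, j + 1)
        = ∑ k : ZMod K, ∑ j : ZMod M,
            g (k + l) * u (k + l, j) * u (k + l - l, j) * u (k + l - l, j + 1) :=
          (shift_sum_k l (fun k j => g k * u (k, j) * u (k - l, j) * u (k - l, j + 1))).symm
      _ = ∑ k : ZMod K, ∑ j : ZMod M,
            g (k + l) * u (k, j + 1) * u (k, j + 1 - 1) * u (k + l, j + 1 - 1) := by
          refine Finset.sum_congr rfl fun k _ => Finset.sum_congr rfl fun j _ => ?_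
          simp only [add_sub_cancel_right]
          ring
      _ = ∑ k : ZMod K, ∑ j : ZMod M,
            g (k + l) * u (k, j) * u (k, j - 1) * u (k + l, j - 1) :=
          shift_sum_j 1 (fun k j => g (k + l) * u (k, j) * u (k, j - 1) * u (k + l, j - 1))
  simp only [Finset.sum_sub_distrib, Finset.sum_add_distrib, hA, hC]
  ring

/-- If `β_k^l = 2γ_{k+l}^l` for all `k` and `l ≠ 0`, then
`∑_{k,j,l≠0} u_{k,j}[β_k^l(b_{k,j}^l − b_{k,j−1}^l) + γ_k^l(r_{k,j}^l − r_{k,j−1}^l)] = 0`. -/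
theorem sum_u_mul_br_diff_eq_zero (K M : ℕ) [NeZero K] [NeZero M] (hK : 2 ≤ K) (hM : 2 ≤ M)
    (β γ : ZMod K → ZMod K → ℝ)
    (hβγ : ∀ k l : ZMod K, l ≠ 0 → β k l = 2 * γ (k + l) l)
    (u : (ZMod K × ZMod M) → ℝ) :
    ∑ k : ZMod K, ∑ j : ZMod M, ∑ l ∈ Finset.univ.erase (0 : ZMod K),
        u (k, j) * (β k l * (bTerm K M k j l u - bTerm K M k (j - 1) l u)
          + γ k l * (rTerm K M k j l u - rTerm K M k (j - 1) l u)) = 0 := by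
  set t : ZMod K → ZMod M → ZMod K → ℝ := fun k j l =>
    u (k, j) * (β k l * (bTerm K M k j l u - bTerm K M k (j - 1) l u)
      + γ k l * (rTerm K M k j l u - rTerm K M k (j - 1) l u)) with ht
  have hswap : ∑ k : ZMod K, ∑ j : ZMod M, ∑ l ∈ Finset.univ.erase (0 : ZMod K), t k j l
      = ∑ l ∈ Finset.univ.erase (0 : ZMod K), ∑ k : ZMod K, ∑ j : ZMod M, t k j l :=
    calc ∑ k : ZMod K, ∑ j : ZMod M, ∑ l ∈ Finset.univ.erase (0 : ZMod K), t k j l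
        = ∑ k : ZMod K, ∑ l ∈ Finset.univ.erase (0 : ZMod K), ∑ j : ZMod M, t k j l :=
          Finset.sum_congr rfl fun k _ => Finset.sum_comm
      _ = ∑ l ∈ Finset.univ.erase (0 : ZMod K), ∑ k : ZMod K, ∑ j : ZMod M, t k j l :=
          Finset.sum_comm
  rw [hswap]
  refine Finset.sum_eq_zero fun l hl => ?_
  have hl0 : l ≠ 0 := Finset.ne_of_mem_erase hl
  have hstep : ∀ k : ZMod K, ∀ j : ZMod M, t k j l
      = (fun k : ZMod K => γ k l) (k + l) * u (k, j) * u (k, j + 1) * u (k + l, j + 1)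
        - (fun k : ZMod K => γ k l) (k + l) * u (k, j) * u (k, j - 1) * u (k + l, j - 1)
        + (fun k : ZMod K => γ k l) k * u (k, j) * u (k - l, j) * u (k - l, j + 1)
        - (fun k : ZMod K => γ k l) k * u (k, j) * u (k - l, j - 1) * u (k - l, j) := by
    intro k j
    rw [ht]
    simp only [hβγ k l hl0, bTerm, rTerm, sub_add_cancel]
    ring
  calc ∑ k : ZMod K, ∑ j : ZMod M, t k j l
      = ∑ k : ZMod K, ∑ j : ZMod M,
        ((fun k : ZMod K => γ k l) (k + l) * u (k, j) * u (k, j + 1) * u (k + l, j + 1)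
        - (fun k : ZMod K => γ k l) (k + l) * u (k, j) * u (k, j - 1) * u (k + l, j - 1)
        + (fun k : ZMod K => γ k l) k * u (k, j) * u (k - l, j) * u (k - l, j + 1)
        - (fun k : ZMod K => γ k l) k * u (k, j) * u (k - l, j - 1) * u (k - l, j)) :=
        Finset.sum_congr rfl fun k _ => Finset.sum_congr rfl fun j _ => hstep k j
    _ = 0 := key_sum l (fun k => γ k l) u
end

section
/- Assume β_k^a = 2γ_{k+a}^a and λ_k^{k−a,k−a'} = λ_k^{k−a',k−a} = λ_{k−a}^{k,k−a'} for all k, a, a' ∈ ℤ_K. Then ∑_{k∈ℤ_K}∑_{j∈ℤ_M} (u_{k,j} B_{k,j}(u) − ∂_{k,j}B_{k,j}(u)) = 0, where B_{k,j} = G_{k,j} − G_{k,j−1} and G_{k,j} = α_k w_{k,j} + ∑_{l≠0} β_k^l b_{k,j}^l + ∑_{l≠0} γ_k^l r_{k,j}^l + ∑_{l≠0}∑_{l'≠0, l'≠l} λ_k^{k−l,k−l'} p_{k,j}^{l,l'}. -/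
/-- The partial derivative `∂_{k,j}` in the coordinate `u_{k,j}` on `ℝ^{ℤ_K × ℤ_M}`. -/
noncomputable def pd (K M : ℕ) (k : ZMod K) (j : ZMod M)
    (f : ((ZMod K × ZMod M) → ℝ) → ℝ) (u : (ZMod K × ZMod M) → ℝ) : ℝ :=
  deriv (fun t => f (Function.update u (k, j) t)) (u (k, j))

/-- `w_{k,j} = (1/3)(u_{k,j}² + u_{k,j}u_{k,j+1} + u_{k,j+1}²)`. -/
noncomputable def wTerm (K M : ℕ) (k : ZMod K) (j : ZMod M)
    (u : (ZMod K × ZMod M) → ℝ) : ℝ :=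
  (1 / 3) * (u (k, j) ^ 2 + u (k, j) * u (k, j + 1) + u (k, j + 1) ^ 2)

/-- `p_{k,j}^{l,l'}`. -/
noncomputable def pTerm (K M : ℕ) (k : ZMod K) (j : ZMod M) (l l' : ZMod K)
    (u : (ZMod K × ZMod M) → ℝ) : ℝ :=
  (1 / 6) * (2 * u (k - l, j) * u (k - l', j) + u (k - l, j) * u (k - l', j + 1)
    + u (k - l, j + 1) * u (k - l', j) + 2 * u (k - l, j + 1) * u (k - l', j + 1))

/-- `G_{k,j} = α_k w_{k,j} + ∑_{l≠0} β_k^l b_{k,j}^l + ∑_{l≠0} γ_k^l r_{k,j}^l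
  + ∑_{l≠0}∑_{l'≠0,l'≠l} λ_k^{k−l,k−l'} p_{k,j}^{l,l'}`. -/
noncomputable def GTerm (K M : ℕ) [NeZero K] (α : ZMod K → ℝ) (β γ : ZMod K → ZMod K → ℝ)
    (lam : ZMod K → ZMod K → ZMod K → ℝ) (k : ZMod K) (j : ZMod M)
    (u : (ZMod K × ZMod M) → ℝ) : ℝ :=
  α k * wTerm K M k j u
    + ∑ l ∈ Finset.univ.erase (0 : ZMod K), β k l * bTerm K M k j l u
    + ∑ l ∈ Finset.univ.erase (0 : ZMod K), γ k l * rTerm K M k j l u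
    + ∑ l ∈ Finset.univ.erase (0 : ZMod K), ∑ l' ∈ (Finset.univ.erase (0 : ZMod K)).erase l,
        lam k (k - l) (k - l') * pTerm K M k j l l' u

/-- `B_{k,j} = G_{k,j} − G_{k,j−1}`. -/
noncomputable def BTerm (K M : ℕ) [NeZero K] (α : ZMod K → ℝ) (β γ : ZMod K → ZMod K → ℝ)
    (lam : ZMod K → ZMod K → ZMod K → ℝ) (k : ZMod K) (j : ZMod M)
    (u : (ZMod K × ZMod M) → ℝ) : ℝ :=
  GTerm K M α β γ lam k j u - GTerm K M α β γ lam k (j - 1) u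

noncomputable def dl (K M : ℕ) (k : ZMod K) (j : ZMod M) (p : ZMod K × ZMod M) : ℝ :=
  if p = (k, j) then 1 else 0

lemma hasDerivAt_upd (K M : ℕ) (u : (ZMod K × ZMod M) → ℝ) (k : ZMod K) (j : ZMod M)
    (p : ZMod K × ZMod M) :
    HasDerivAt (fun t => Function.update u (k, j) t p) (dl K M k j p) (u (k, j)) := by
  unfold dl
  rcases eq_or_ne p (k, j) with h | h
  · subst h
    simp only [Function.update_self, if_pos rfl]
    exact hasDerivAt_id _
  · simp only [Function.update_of_ne h, if_neg h]
    exact hasDerivAt_const _ _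

noncomputable def DG (K M : ℕ) [NeZero K] (α : ZMod K → ℝ) (β γ : ZMod K → ZMod K → ℝ)
    (lam : ZMod K → ZMod K → ZMod K → ℝ) (k : ZMod K) (j : ZMod M)
    (k' : ZMod K) (j' : ZMod M) (u : (ZMod K × ZMod M) → ℝ) : ℝ :=
  α k' * ((1/3) * ((2 * u (k', j') + u (k', j' + 1)) * dl K M k j (k', j')
      + (u (k', j') + 2 * u (k', j' + 1)) * dl K M k j (k', j' + 1)))
  + ∑ l ∈ Finset.univ.erase (0 : ZMod K),
      β k' l * ((1/2) * (u (k' + l, j') * dl K M k j (k', j') + u (k', j') * dl K M k j (k' + l, j')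
        + u (k' + l, j' + 1) * dl K M k j (k', j' + 1) + u (k', j' + 1) * dl K M k j (k' + l, j' + 1)))
  + ∑ l ∈ Finset.univ.erase (0 : ZMod K),
      γ k' l * (u (k' - l, j' + 1) * dl K M k j (k' - l, j') + u (k' - l, j') * dl K M k j (k' - l, j' + 1))
  + ∑ l ∈ Finset.univ.erase (0 : ZMod K), ∑ l' ∈ (Finset.univ.erase (0 : ZMod K)).erase l,
      lam k' (k' - l) (k' - l') * ((1/6) * (
        2 * (u (k' - l', j') * dl K M k j (k' - l, j') + u (k' - l, j') * dl K M k j (k' - l', j'))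
        + (u (k' - l', j' + 1) * dl K M k j (k' - l, j') + u (k' - l, j') * dl K M k j (k' - l', j' + 1))
        + (u (k' - l', j') * dl K M k j (k' - l, j' + 1) + u (k' - l, j' + 1) * dl K M k j (k' - l', j'))
        + 2 * (u (k' - l', j' + 1) * dl K M k j (k' - l, j' + 1) + u (k' - l, j' + 1) * dl K M k j (k' - l', j' + 1))))

lemma hasDerivAt_G (K M : ℕ) [NeZero K] (α : ZMod K → ℝ) (β γ : ZMod K → ZMod K → ℝ)
    (lam : ZMod K → ZMod K → ZMod K → ℝ) (k : ZMod K) (j : ZMod M)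
    (k' : ZMod K) (j' : ZMod M) (u : (ZMod K × ZMod M) → ℝ) :
    HasDerivAt (fun t => GTerm K M α β γ lam k' j' (Function.update u (k, j) t))
      (DG K M α β γ lam k j k' j' u) (u (k, j)) := by
  have hv := hasDerivAt_upd K M u k j
  have hw : HasDerivAt (fun t => α k' * wTerm K M k' j' (Function.update u (k, j) t))
      (α k' * ((1/3) * ((2 * u (k', j') + u (k', j' + 1)) * dl K M k j (k', j')
        + (u (k', j') + 2 * u (k', j' + 1)) * dl K M k j (k', j' + 1)))) (u (k, j)) := by
    have h := (((((hv (k', j')).fun_pow 2).fun_add ((hv (k', j')).fun_mul (hv (k', j' + 1)))).fun_add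
      ((hv (k', j' + 1)).fun_pow 2)).const_mul ((1:ℝ)/3)).const_mul (α k')
    simp only [Function.update_eq_self] at h
    unfold wTerm
    convert h using 1
    · rfl
    · rfl
    ring
  have hb : ∀ l ∈ Finset.univ.erase (0 : ZMod K),
      HasDerivAt (fun t => β k' l * bTerm K M k' j' l (Function.update u (k, j) t))
        (β k' l * ((1/2) * (u (k' + l, j') * dl K M k j (k', j') + u (k', j') * dl K M k j (k' + l, j')
          + u (k' + l, j' + 1) * dl K M k j (k', j' + 1) + u (k', j' + 1) * dl K M k j (k' + l, j' + 1))))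
        (u (k, j)) := by
    intro l _
    have h := ((((hv (k', j')).fun_mul (hv (k' + l, j'))).fun_add
      ((hv (k', j' + 1)).fun_mul (hv (k' + l, j' + 1)))).const_mul ((1:ℝ)/2)).const_mul (β k' l)
    simp only [Function.update_eq_self] at h
    unfold bTerm
    convert h using 1
    · rfl
    · rfl
    ring
  have hr : ∀ l ∈ Finset.univ.erase (0 : ZMod K),
      HasDerivAt (fun t => γ k' l * rTerm K M k' j' l (Function.update u (k, j) t))
        (γ k' l * (u (k' - l, j' + 1) * dl K M k j (k' - l, j') + u (k' - l, j') * dl K M k j (k' - l, j' + 1)))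
        (u (k, j)) := by
    intro l _
    have h := (((hv (k' - l, j')).fun_mul (hv (k' - l, j' + 1)))).const_mul (γ k' l)
    simp only [Function.update_eq_self] at h
    unfold rTerm
    convert h using 1
    · rfl
    · rfl
    ring
  have hp : ∀ l ∈ Finset.univ.erase (0 : ZMod K), ∀ l' ∈ (Finset.univ.erase (0 : ZMod K)).erase l,
      HasDerivAt (fun t => lam k' (k' - l) (k' - l') * pTerm K M k' j' l l' (Function.update u (k, j) t))
        (lam k' (k' - l) (k' - l') * ((1/6) * (
          2 * (u (k' - l', j') * dl K M k j (k' - l, j') + u (k' - l, j') * dl K M k j (k' - l', j'))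
          + (u (k' - l', j' + 1) * dl K M k j (k' - l, j') + u (k' - l, j') * dl K M k j (k' - l', j' + 1))
          + (u (k' - l', j') * dl K M k j (k' - l, j' + 1) + u (k' - l, j' + 1) * dl K M k j (k' - l', j'))
          + 2 * (u (k' - l', j' + 1) * dl K M k j (k' - l, j' + 1) + u (k' - l, j' + 1) * dl K M k j (k' - l', j' + 1)))))
        (u (k, j)) := by
    intro l _ l' _
    have h := ((((((((hv (k' - l, j')).fun_mul (hv (k' - l', j'))).const_mul (2:ℝ)).fun_add
      ((hv (k' - l, j')).fun_mul (hv (k' - l', j' + 1)))).fun_add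
      ((hv (k' - l, j' + 1)).fun_mul (hv (k' - l', j')))).fun_add
      (((hv (k' - l, j' + 1)).fun_mul (hv (k' - l', j' + 1))).const_mul (2:ℝ))).const_mul ((1:ℝ)/6)).const_mul (lam k' (k' - l) (k' - l')))
    simp only [Function.update_eq_self] at h
    unfold pTerm
    convert h using 1
    · rfl
    · rfl
    · funext t
      ring
    · ring
  unfold GTerm DG
  exact ((hw.fun_add (HasDerivAt.fun_sum hb)).fun_add (HasDerivAt.fun_sum hr)).fun_add
    (HasDerivAt.fun_sum (fun l hl => HasDerivAt.fun_sum (hp l hl)))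
lemma pd_B (K M : ℕ) [NeZero K] [NeZero M] (α : ZMod K → ℝ) (β γ : ZMod K → ZMod K → ℝ)
    (lam : ZMod K → ZMod K → ZMod K → ℝ) (k : ZMod K) (j : ZMod M)
    (u : (ZMod K × ZMod M) → ℝ) (h1 : (1 : ZMod M) ≠ 0) :
    pd K M k j (BTerm K M α β γ lam k j) u
      = α k * (1/3) * (u (k, j + 1) - u (k, j - 1)) := by
  have hd : HasDerivAt (fun t => BTerm K M α β γ lam k j (Function.update u (k, j) t))
      (DG K M α β γ lam k j k j u - DG K M α β γ lam k j k (j - 1) u) (u (k, j)) := by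
    unfold BTerm
    exact (hasDerivAt_G K M α β γ lam k j k j u).sub (hasDerivAt_G K M α β γ lam k j k (j - 1) u)
  rw [pd, hd.deriv]
  have hj1 : j + 1 ≠ j := fun h => h1 (add_eq_left.mp h)
  have hjm : j - 1 ≠ j := fun h => h1 (sub_eq_self.mp h)
  have d1 : dl K M k j (k, j) = (1:ℝ) := if_pos rfl
  have d2 : dl K M k j (k, j + 1) = 0 := by
    unfold dl; rw [if_neg]; simp [hj1]
  have d2' : dl K M k j (k, j - 1) = 0 := by
    unfold dl; rw [if_neg]; simp [hjm]
  have d3 : ∀ l : ZMod K, l ≠ 0 → ∀ j'' : ZMod M, dl K M k j (k + l, j'') = 0 := by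
    intro l hl j''; unfold dl; rw [if_neg]
    intro h; exact hl (add_eq_left.mp (congrArg Prod.fst h))
  have d4 : ∀ l : ZMod K, l ≠ 0 → ∀ j'' : ZMod M, dl K M k j (k - l, j'') = 0 := by
    intro l hl j''; unfold dl; rw [if_neg]
    intro h; exact hl (sub_eq_self.mp (congrArg Prod.fst h))
  have hG1 : DG K M α β γ lam k j k j u
      = α k * ((1/3) * (2 * u (k, j) + u (k, j + 1)))
        + (∑ l ∈ Finset.univ.erase (0 : ZMod K), β k l * ((1/2) * u (k + l, j)))
        + 0 + 0 := by
    unfold DG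
    congr 1
    · congr 1
      · congr 1
        · rw [d1, d2]; ring
        · refine Finset.sum_congr rfl fun l hl => ?_
          rw [d1, d2, d3 l (Finset.ne_of_mem_erase hl) j, d3 l (Finset.ne_of_mem_erase hl) (j + 1)]
          ring
      · refine Finset.sum_eq_zero fun l hl => ?_
        rw [d4 l (Finset.ne_of_mem_erase hl) j, d4 l (Finset.ne_of_mem_erase hl) (j + 1)]
        ring
    · refine Finset.sum_eq_zero fun l hl => Finset.sum_eq_zero fun l' hl' => ?_
      have hl0 := Finset.ne_of_mem_erase hl
      have hl'0 := Finset.ne_of_mem_erase (Finset.mem_of_mem_erase hl')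
      rw [d4 l hl0 j, d4 l hl0 (j + 1), d4 l' hl'0 j, d4 l' hl'0 (j + 1)]
      ring
  have hG2 : DG K M α β γ lam k j k (j - 1) u
      = α k * ((1/3) * (u (k, j - 1) + 2 * u (k, j)))
        + (∑ l ∈ Finset.univ.erase (0 : ZMod K), β k l * ((1/2) * u (k + l, j)))
        + 0 + 0 := by
    unfold DG
    rw [sub_add_cancel j 1]
    congr 1
    · congr 1
      · congr 1
        · rw [d1, d2']; ring
        · refine Finset.sum_congr rfl fun l hl => ?_
          rw [d1, d2', d3 l (Finset.ne_of_mem_erase hl) j, d3 l (Finset.ne_of_mem_erase hl) (j - 1)]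
          ring
      · refine Finset.sum_eq_zero fun l hl => ?_
        rw [d4 l (Finset.ne_of_mem_erase hl) j, d4 l (Finset.ne_of_mem_erase hl) (j - 1)]
        ring
    · refine Finset.sum_eq_zero fun l hl => Finset.sum_eq_zero fun l' hl' => ?_
      have hl0 := Finset.ne_of_mem_erase hl
      have hl'0 := Finset.ne_of_mem_erase (Finset.mem_of_mem_erase hl')
      rw [d4 l hl0 j, d4 l hl0 (j - 1), d4 l' hl'0 j, d4 l' hl'0 (j - 1)]
      ring
  rw [hG1, hG2]
  ring
lemma sum_shift {M : ℕ} [NeZero M] (f : ZMod M → ℝ) : ∑ j, f (j + 1) = ∑ j, f j :=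
  Fintype.sum_equiv (Equiv.addRight 1) _ _ (fun _ => rfl)

lemma tele {M : ℕ} [NeZero M] (f : ZMod M → ℝ) : ∑ j : ZMod M, (f j - f (j + 1)) = 0 := by
  rw [Finset.sum_sub_distrib, sum_shift]; exact sub_self _

lemma part2 (K M : ℕ) [NeZero K] [NeZero M] (α : ZMod K → ℝ) (β γ : ZMod K → ZMod K → ℝ)
    (lam : ZMod K → ZMod K → ZMod K → ℝ) (k : ZMod K)
    (u : (ZMod K × ZMod M) → ℝ) (h1 : (1 : ZMod M) ≠ 0) :
    ∑ j : ZMod M, pd K M k j (BTerm K M α β γ lam k j) u = 0 := by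
  rw [Finset.sum_congr rfl fun j _ => pd_B K M α β γ lam k j u h1]
  rw [← Finset.mul_sum]
  rw [Finset.sum_sub_distrib]
  rw [sum_shift (fun j => u (k, j))]
  have h2 : ∑ j : ZMod M, u (k, j - 1) = ∑ j : ZMod M, u (k, j) := by
    rw [← sum_shift (fun j => u (k, j - 1))]
    exact Finset.sum_congr rfl fun j _ => by rw [add_sub_cancel_right j 1]
  rw [h2, sub_self, mul_zero]
noncomputable def Pq (K M : ℕ) [NeZero M] (u : (ZMod K × ZMod M) → ℝ) (k l l' : ZMod K) : ℝ :=
  ∑ j : ZMod M, (u (k, j) - u (k, j + 1)) * pTerm K M k j l l' u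

noncomputable def Qe (K M : ℕ) [NeZero M] (lam : ZMod K → ZMod K → ZMod K → ℝ)
    (u : (ZMod K × ZMod M) → ℝ) (t : ZMod K × ZMod K × ZMod K) : ℝ :=
  if t.2.1 = 0 then 0 else if t.2.2 = 0 then 0 else if t.2.2 = t.2.1 then 0
  else lam t.1 (t.1 - t.2.1) (t.1 - t.2.2) * Pq K M u t.1 t.2.1 t.2.2

def sig (K : ℕ) : (ZMod K × ZMod K × ZMod K) ≃ (ZMod K × ZMod K × ZMod K) where
  toFun t := (t.1 - t.2.1, t.2.2 - t.2.1, -t.2.1)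
  invFun t := (t.1 - t.2.2, -t.2.2, t.2.1 - t.2.2)
  left_inv t := by
    obtain ⟨k, l, l'⟩ := t
    simp only [Prod.mk.injEq]
    refine ⟨by ring, by ring, by ring⟩
  right_inv t := by
    obtain ⟨k, l, l'⟩ := t
    simp only [Prod.mk.injEq]
    refine ⟨by ring, by ring, by ring⟩

lemma qsum (K M : ℕ) [NeZero K] [NeZero M] (lam : ZMod K → ZMod K → ZMod K → ℝ)
    (hlam₁ : ∀ k a a' : ZMod K, lam k (k - a) (k - a') = lam k (k - a') (k - a))
    (hlam₂ : ∀ k a a' : ZMod K, lam k (k - a) (k - a') = lam (k - a) k (k - a'))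
    (u : (ZMod K × ZMod M) → ℝ) (k l l' : ZMod K) :
    lam k (k - l) (k - l') * Pq K M u k l l'
    + lam (k - l) (k - l - (l' - l)) (k - l - -l) * Pq K M u (k - l) (l' - l) (-l)
    + lam (k - l') (k - l' - -l') (k - l' - (l - l')) * Pq K M u (k - l') (-l') (l - l') = 0 := by
  have i1 : k - l - (l' - l) = k - l' := by ring
  have i2 : k - l - -l = k := by ring
  have i3 : k - l' - -l' = k := by ring
  have i4 : k - l' - (l - l') = k - l := by ring
  rw [i1, i2, i3, i4]
  have e1 : lam (k - l) (k - l') k = lam k (k - l) (k - l') := by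
    have s1 := hlam₂ k l l'
    have s2 := hlam₁ (k - l) (-l) (l' - l)
    rw [i2, i1] at s2
    rw [← s2, ← s1]
  have e2 : lam (k - l') k (k - l) = lam k (k - l) (k - l') := by
    have s1 := hlam₁ k l l'
    have s2 := hlam₂ k l' l
    rw [← s2, ← s1]
  rw [e1, e2, ← mul_add, ← mul_add]
  have hsum : Pq K M u k l l' + Pq K M u (k - l) (l' - l) (-l)
      + Pq K M u (k - l') (-l') (l - l') = 0 := by
    unfold Pq
    rw [← Finset.sum_add_distrib, ← Finset.sum_add_distrib]
    have key : ∀ j : ZMod M, ((u (k, j) - u (k, j + 1)) * pTerm K M k j l l' u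
        + (u (k - l, j) - u (k - l, j + 1)) * pTerm K M (k - l) j (l' - l) (-l) u)
        + (u (k - l', j) - u (k - l', j + 1)) * pTerm K M (k - l') j (-l') (l - l') u
        = (fun j' => u (k, j') * u (k - l, j') * u (k - l', j')) j
          - (fun j' => u (k, j') * u (k - l, j') * u (k - l', j')) (j + 1) := by
      intro j
      simp only
      unfold pTerm
      rw [i1, i2, i3, i4]
      ring
    rw [Finset.sum_congr rfl fun j _ => key j]
    exact tele _
  rw [hsum, mul_zero]

lemma T4lemma (K M : ℕ) [NeZero K] [NeZero M] (lam : ZMod K → ZMod K → ZMod K → ℝ)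
    (hlam₁ : ∀ k a a' : ZMod K, lam k (k - a) (k - a') = lam k (k - a') (k - a))
    (hlam₂ : ∀ k a a' : ZMod K, lam k (k - a) (k - a') = lam (k - a) k (k - a'))
    (u : (ZMod K × ZMod M) → ℝ) :
    ∑ k : ZMod K, ∑ j : ZMod M, ∑ l ∈ Finset.univ.erase (0 : ZMod K),
      ∑ l' ∈ (Finset.univ.erase (0 : ZMod K)).erase l,
        (u (k, j) - u (k, j + 1)) * (lam k (k - l) (k - l') * pTerm K M k j l l' u) = 0 := by
  have hpt : ∀ t : ZMod K × ZMod K × ZMod K,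
      Qe K M lam u t + Qe K M lam u (sig K t) + Qe K M lam u (sig K (sig K t)) = 0 := by
    rintro ⟨k, l, l'⟩
    by_cases hl : l = 0
    · subst hl; simp [Qe, sig]
    by_cases hl' : l' = 0
    · subst hl'; simp [Qe, sig, hl]
    by_cases hll' : l' = l
    · subst hll'; simp [Qe, sig, hl]
    · have a1 : l' - l ≠ 0 := sub_ne_zero.mpr hll'
      have a2 : (-l : ZMod K) ≠ 0 := neg_ne_zero.mpr hl
      have a3 : (-l : ZMod K) ≠ l' - l := fun h => hl' (by linear_combination -h)
      have a4 : (-l' : ZMod K) ≠ 0 := neg_ne_zero.mpr hl'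
      have a5 : l - l' ≠ 0 := sub_ne_zero.mpr (fun h => hll' h.symm)
      have a6 : l - l' ≠ -l' := fun h => hl (by linear_combination h)
      have hs1 : sig K (k, l, l') = (k - l, l' - l, -l) := rfl
      have hs2 : sig K (sig K (k, l, l')) = (k - l', -l', l - l') := by
        rw [hs1]
        simp only [sig, Equiv.coe_fn_mk, Prod.mk.injEq]
        refine ⟨by ring, by ring, by ring⟩
      rw [hs2, hs1]
      have g1 : Qe K M lam u (k, l, l') = lam k (k - l) (k - l') * Pq K M u k l l' := by
        unfold Qe; rw [if_neg hl, if_neg hl', if_neg hll']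
      have g2 : Qe K M lam u (k - l, l' - l, -l)
          = lam (k - l) (k - l - (l' - l)) (k - l - -l) * Pq K M u (k - l) (l' - l) (-l) := by
        unfold Qe; rw [if_neg a1, if_neg a2, if_neg a3]
      have g3 : Qe K M lam u (k - l', -l', l - l')
          = lam (k - l') (k - l' - -l') (k - l' - (l - l')) * Pq K M u (k - l') (-l') (l - l') := by
        unfold Qe; rw [if_neg a4, if_neg a5, if_neg a6]
      rw [g1, g2, g3]
      exact qsum K M lam hlam₁ hlam₂ u k l l'
  have step1 : ∀ k : ZMod K, (∑ j : ZMod M, ∑ l ∈ Finset.univ.erase (0 : ZMod K),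
      ∑ l' ∈ (Finset.univ.erase (0 : ZMod K)).erase l,
        (u (k, j) - u (k, j + 1)) * (lam k (k - l) (k - l') * pTerm K M k j l l' u))
      = ∑ l ∈ Finset.univ.erase (0 : ZMod K), ∑ l' ∈ (Finset.univ.erase (0 : ZMod K)).erase l,
          lam k (k - l) (k - l') * Pq K M u k l l' := by
    intro k
    rw [Finset.sum_comm]
    refine Finset.sum_congr rfl fun l _ => ?_
    rw [Finset.sum_comm]
    refine Finset.sum_congr rfl fun l' _ => ?_
    unfold Pq
    rw [Finset.mul_sum]
    exact Finset.sum_congr rfl fun j _ => by ring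
  rw [Finset.sum_congr rfl fun k _ => step1 k]
  have expand : ∀ (s : Finset (ZMod K)) (a : ZMod K) (f : ZMod K → ℝ),
      ∑ x ∈ s.erase a, f x = ∑ x ∈ s, if x = a then 0 else f x := by
    intro s a f
    rw [← Finset.sum_erase s (if_pos rfl : (if a = a then (0:ℝ) else f a) = 0)]
    exact Finset.sum_congr rfl fun x hx => (if_neg (Finset.ne_of_mem_erase hx)).symm
  have conv1 : ∀ k : ZMod K, (∑ l ∈ Finset.univ.erase (0 : ZMod K),
      ∑ l' ∈ (Finset.univ.erase (0 : ZMod K)).erase l, lam k (k - l) (k - l') * Pq K M u k l l')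
      = ∑ l : ZMod K, ∑ l' : ZMod K, Qe K M lam u (k, l, l') := by
    intro k
    rw [expand Finset.univ 0]
    refine Finset.sum_congr rfl fun l _ => ?_
    by_cases hl : l = 0
    · subst hl
      rw [if_pos rfl]
      exact (Finset.sum_eq_zero fun l' _ => by unfold Qe; simp).symm
    · rw [if_neg hl]
      rw [expand (Finset.univ.erase (0 : ZMod K)) l, expand Finset.univ 0]
      refine Finset.sum_congr rfl fun l' _ => ?_
      unfold Qe
      simp only [if_neg hl]
  rw [Finset.sum_congr rfl fun k _ => conv1 k]
  have conv2 : ∑ t : ZMod K × ZMod K × ZMod K, Qe K M lam u t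
      = ∑ k : ZMod K, ∑ l : ZMod K, ∑ l' : ZMod K, Qe K M lam u (k, l, l') := by
    rw [Fintype.sum_prod_type (Qe K M lam u)]
    exact Finset.sum_congr rfl fun k _ => Fintype.sum_prod_type _
  rw [← conv2]
  have r1 : ∑ t : ZMod K × ZMod K × ZMod K, Qe K M lam u (sig K t)
      = ∑ t : ZMod K × ZMod K × ZMod K, Qe K M lam u t := Equiv.sum_comp (sig K) _
  have r2 : ∑ t : ZMod K × ZMod K × ZMod K, Qe K M lam u (sig K (sig K t))
      = ∑ t : ZMod K × ZMod K × ZMod K, Qe K M lam u t := by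
    have := Equiv.sum_comp (sig K) (fun t => Qe K M lam u (sig K t))
    rw [this, r1]
  have h3 : (3 : ℝ) * ∑ t : ZMod K × ZMod K × ZMod K, Qe K M lam u t = 0 := by
    have : ∑ t : ZMod K × ZMod K × ZMod K,
        (Qe K M lam u t + Qe K M lam u (sig K t) + Qe K M lam u (sig K (sig K t))) = 0 :=
      Finset.sum_eq_zero fun t _ => hpt t
    rw [Finset.sum_add_distrib, Finset.sum_add_distrib, r1, r2] at this
    linarith
  linarith
lemma T1lemma (K M : ℕ) [NeZero M] (α : ZMod K → ℝ) (u : (ZMod K × ZMod M) → ℝ) (k : ZMod K) :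
    ∑ j : ZMod M, (u (k, j) - u (k, j + 1)) * (α k * wTerm K M k j u) = 0 := by
  have key : ∀ j : ZMod M, (u (k, j) - u (k, j + 1)) * (α k * wTerm K M k j u)
      = (fun j' => α k * ((1/3) * u (k, j') ^ 3)) j
        - (fun j' => α k * ((1/3) * u (k, j') ^ 3)) (j + 1) := by
    intro j
    simp only
    unfold wTerm
    ring
  rw [Finset.sum_congr rfl fun j _ => key j]
  exact tele _

lemma T23lemma (K M : ℕ) [NeZero K] [NeZero M] (β γ : ZMod K → ZMod K → ℝ)
    (hβγ : ∀ k a : ZMod K, β k a = 2 * γ (k + a) a)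
    (u : (ZMod K × ZMod M) → ℝ) :
    (∑ k : ZMod K, ∑ j : ZMod M, ∑ l ∈ Finset.univ.erase (0 : ZMod K),
      (u (k, j) - u (k, j + 1)) * (β k l * bTerm K M k j l u))
    + (∑ k : ZMod K, ∑ j : ZMod M, ∑ l ∈ Finset.univ.erase (0 : ZMod K),
      (u (k, j) - u (k, j + 1)) * (γ k l * rTerm K M k j l u)) = 0 := by
  have hT2 : (∑ k : ZMod K, ∑ j : ZMod M, ∑ l ∈ Finset.univ.erase (0 : ZMod K),
      (u (k, j) - u (k, j + 1)) * (β k l * bTerm K M k j l u))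
      = ∑ l ∈ Finset.univ.erase (0 : ZMod K), ∑ k : ZMod K,
          2 * γ k l * ∑ j : ZMod M,
            (1/2) * (u (k - l, j) * u (k - l, j + 1) * (u (k, j + 1) - u (k, j))) := by
    have step1 : ∀ k : ZMod K, (∑ j : ZMod M, ∑ l ∈ Finset.univ.erase (0 : ZMod K),
        (u (k, j) - u (k, j + 1)) * (β k l * bTerm K M k j l u))
        = ∑ l ∈ Finset.univ.erase (0 : ZMod K), β k l * ∑ j : ZMod M,
            (1/2) * (u (k, j) * u (k, j + 1) * (u (k + l, j + 1) - u (k + l, j))) := by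
      intro k
      rw [Finset.sum_comm]
      refine Finset.sum_congr rfl fun l _ => ?_
      have key : ∀ j : ZMod M, (u (k, j) - u (k, j + 1)) * (β k l * bTerm K M k j l u)
          = ((fun j' => β k l * ((1/2) * (u (k, j') ^ 2 * u (k + l, j')))) j
            - (fun j' => β k l * ((1/2) * (u (k, j') ^ 2 * u (k + l, j')))) (j + 1))
            + β k l * ((1/2) * (u (k, j) * u (k, j + 1) * (u (k + l, j + 1) - u (k + l, j)))) := by
        intro j
        simp only
        unfold bTerm
        ring
      rw [Finset.sum_congr rfl fun j _ => key j, Finset.sum_add_distrib, tele, zero_add,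
        ← Finset.mul_sum]
    rw [Finset.sum_congr rfl fun k _ => step1 k, Finset.sum_comm]
    refine Finset.sum_congr rfl fun l _ => ?_
    refine Fintype.sum_equiv (Equiv.addRight l) _ _ fun k => ?_
    simp only [Equiv.coe_addRight]
    rw [hβγ k l, add_sub_cancel_right k l]
  have hT3 : (∑ k : ZMod K, ∑ j : ZMod M, ∑ l ∈ Finset.univ.erase (0 : ZMod K),
      (u (k, j) - u (k, j + 1)) * (γ k l * rTerm K M k j l u))
      = ∑ l ∈ Finset.univ.erase (0 : ZMod K), ∑ k : ZMod K,
          γ k l * ∑ j : ZMod M, (u (k, j) - u (k, j + 1)) * rTerm K M k j l u := by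
    rw [Finset.sum_congr rfl fun k _ => Finset.sum_comm, Finset.sum_comm]
    refine Finset.sum_congr rfl fun l _ => Finset.sum_congr rfl fun k _ => ?_
    rw [Finset.mul_sum]
    exact Finset.sum_congr rfl fun j _ => by ring
  rw [hT2, hT3, ← Finset.sum_add_distrib]
  refine Finset.sum_eq_zero fun l _ => ?_
  rw [← Finset.sum_add_distrib]
  refine Finset.sum_eq_zero fun k _ => ?_
  rw [Finset.mul_sum, Finset.mul_sum, ← Finset.sum_add_distrib]
  refine Finset.sum_eq_zero fun j _ => ?_
  unfold rTerm
  ring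

lemma part1 (K M : ℕ) [NeZero K] [NeZero M] (α : ZMod K → ℝ) (β γ : ZMod K → ZMod K → ℝ)
    (lam : ZMod K → ZMod K → ZMod K → ℝ)
    (hβγ : ∀ k a : ZMod K, β k a = 2 * γ (k + a) a)
    (hlam₁ : ∀ k a a' : ZMod K, lam k (k - a) (k - a') = lam k (k - a') (k - a))
    (hlam₂ : ∀ k a a' : ZMod K, lam k (k - a) (k - a') = lam (k - a) k (k - a'))
    (u : (ZMod K × ZMod M) → ℝ) :
    ∑ k : ZMod K, ∑ j : ZMod M, u (k, j) * BTerm K M α β γ lam k j u = 0 := by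
  have stepA : ∀ k : ZMod K, (∑ j : ZMod M, u (k, j) * BTerm K M α β γ lam k j u)
      = ∑ j : ZMod M, (u (k, j) - u (k, j + 1)) * GTerm K M α β γ lam k j u := by
    intro k
    unfold BTerm
    simp only [mul_sub]
    rw [Finset.sum_sub_distrib]
    have hshift : ∑ j : ZMod M, u (k, j) * GTerm K M α β γ lam k (j - 1) u
        = ∑ j : ZMod M, u (k, j + 1) * GTerm K M α β γ lam k j u := by
      rw [← sum_shift (fun j => u (k, j) * GTerm K M α β γ lam k (j - 1) u)]
      exact Finset.sum_congr rfl fun j _ => by rw [add_sub_cancel_right j 1]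
    rw [hshift, ← Finset.sum_sub_distrib]
    exact Finset.sum_congr rfl fun j _ => by ring
  rw [Finset.sum_congr rfl fun k _ => stepA k]
  have hsplit : ∀ (k : ZMod K) (j : ZMod M),
      (u (k, j) - u (k, j + 1)) * GTerm K M α β γ lam k j u
      = (u (k, j) - u (k, j + 1)) * (α k * wTerm K M k j u)
        + (∑ l ∈ Finset.univ.erase (0 : ZMod K),
            (u (k, j) - u (k, j + 1)) * (β k l * bTerm K M k j l u))
        + (∑ l ∈ Finset.univ.erase (0 : ZMod K),
            (u (k, j) - u (k, j + 1)) * (γ k l * rTerm K M k j l u))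
        + (∑ l ∈ Finset.univ.erase (0 : ZMod K),
            ∑ l' ∈ (Finset.univ.erase (0 : ZMod K)).erase l,
            (u (k, j) - u (k, j + 1)) * (lam k (k - l) (k - l') * pTerm K M k j l l' u)) := by
    intro k j
    unfold GTerm
    simp only [mul_add, Finset.mul_sum]
  rw [Finset.sum_congr rfl fun k _ => Finset.sum_congr rfl fun j _ => hsplit k j]
  simp only [Finset.sum_add_distrib]
  have h1 : ∑ k : ZMod K, ∑ j : ZMod M,
      (u (k, j) - u (k, j + 1)) * (α k * wTerm K M k j u) = 0 :=
    Finset.sum_eq_zero fun k _ => T1lemma K M α u k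
  have h23 := T23lemma K M β γ hβγ u
  have h4 := T4lemma K M lam hlam₁ hlam₂ u
  linarith

/-- Under the conditions `β_k^a = 2γ_{k+a}^a` and the symmetry of `λ`,
`∑_{k∈ℤ_K}∑_{j∈ℤ_M} (u_{k,j} B_{k,j}(u) − ∂_{k,j}B_{k,j}(u)) = 0`. -/
theorem sum_uB_minus_partialB_eq_zero (K M : ℕ) [NeZero K] [NeZero M]
    (α : ZMod K → ℝ) (β γ : ZMod K → ZMod K → ℝ)
    (lam : ZMod K → ZMod K → ZMod K → ℝ)
    (hβγ : ∀ k a : ZMod K, β k a = 2 * γ (k + a) a)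
    (hlam₁ : ∀ k a a' : ZMod K, lam k (k - a) (k - a') = lam k (k - a') (k - a))
    (hlam₂ : ∀ k a a' : ZMod K, lam k (k - a) (k - a') = lam (k - a) k (k - a'))
    (u : (ZMod K × ZMod M) → ℝ) :
    ∑ k : ZMod K, ∑ j : ZMod M,
        (u (k, j) * BTerm K M α β γ lam k j u
          - pd K M k j (BTerm K M α β γ lam k j) u) = 0 := by
  rcases eq_or_ne M 1 with hM | hM
  · subst hM
    have hB0 : ∀ (k : ZMod K) (j : ZMod 1) (v : (ZMod K × ZMod 1) → ℝ),
        BTerm K 1 α β γ lam k j v = 0 := by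
      intro k j v
      unfold BTerm
      rw [Subsingleton.elim (j - 1) j, sub_self]
    refine Finset.sum_eq_zero fun k _ => Finset.sum_eq_zero fun j _ => ?_
    rw [hB0 k j u, pd]
    simp only [hB0]
    rw [deriv_const]
    ring
  · have h1 : (1 : ZMod M) ≠ 0 := by
      have hM0 := Nat.pos_of_ne_zero (NeZero.ne M)
      have : Fact (1 < M) := ⟨by omega⟩
      exact one_ne_zero
    simp only [Finset.sum_sub_distrib]
    rw [part1 K M α β γ lam hβγ hlam₁ hlam₂ u]
    rw [Finset.sum_eq_zero fun k _ => part2 K M α β γ lam k u h1]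
    ring
end
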